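/- Let m ∈ ℤ^6_{>0} be sorted decreasingly with m_i < |m|/3 for all i. Then the number of 3-element subsets K ⊆ {1,...,6} with ∑_{i∈K} m_i ≥ 2|m|/3 is at most 4, and if it equals 4 then the collection of complements {1,...,6}\K is either {{4,5,6},{3,5,6},{2,5,6},{1,5,6}} or {{4,5,6},{3,5,6},{3,4,6},{3,4,5}}. -/
import Mathlib

set_option maxHeartbeats 2000000

open Finset

theorem excluded_strata_at_most_four (m : Fin 6 → ℤ)
    (hpos : ∀ i, 0 < m i)
    (hsorted : ∀ i j : Fin 6, i ≤ j → m j ≤ m i)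
    (hlt : ∀ i, 3 * m i < ∑ i, m i) :
    let T := Finset.univ.filter
        (fun K : Finset (Fin 6) => K.card = 3 ∧ 2 * ∑ i, m i ≤ 3 * ∑ i ∈ K, m i)
    T.card ≤ 4 ∧
    (T.card = 4 →
      T.image (fun K => Kᶜ)
          = {({3, 4, 5} : Finset (Fin 6)), {2, 4, 5}, {1, 4, 5}, {0, 4, 5}} ∨
      T.image (fun K => Kᶜ)
          = {({3, 4, 5} : Finset (Fin 6)), {2, 4, 5}, {2, 3, 5}, {2, 3, 4}}) := by
  intro T
  have hTdef : T = Finset.univ.filter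
      (fun K : Finset (Fin 6) => K.card = 3 ∧ 2 * ∑ i, m i ≤ 3 * ∑ i ∈ K, m i) := rfl
  have h01 := hsorted 0 1 (by decide)
  have h12 := hsorted 1 2 (by decide)
  have h23 := hsorted 2 3 (by decide)
  have h34 := hsorted 3 4 (by decide)
  have h45 := hsorted 4 5 (by decide)
  have hp5 := hpos 5
  have hp4 := hpos 4
  have hl0 := hlt 0
  rw [Fin.sum_univ_six] at hl0
  -- expand the six relevant sums
  have S1 : ∑ i ∈ ({0,1,2} : Finset (Fin 6)), m i = m 0 + m 1 + m 2 := by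
    rw [Finset.sum_insert (by decide), Finset.sum_insert (by decide), Finset.sum_singleton]; ring
  have S2 : ∑ i ∈ ({0,1,3} : Finset (Fin 6)), m i = m 0 + m 1 + m 3 := by
    rw [Finset.sum_insert (by decide), Finset.sum_insert (by decide), Finset.sum_singleton]; ring
  have S3 : ∑ i ∈ ({0,2,3} : Finset (Fin 6)), m i = m 0 + m 2 + m 3 := by
    rw [Finset.sum_insert (by decide), Finset.sum_insert (by decide), Finset.sum_singleton]; ring
  have S4 : ∑ i ∈ ({1,2,3} : Finset (Fin 6)), m i = m 1 + m 2 + m 3 := by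
    rw [Finset.sum_insert (by decide), Finset.sum_insert (by decide), Finset.sum_singleton]; ring
  have S5 : ∑ i ∈ ({0,1,4} : Finset (Fin 6)), m i = m 0 + m 1 + m 4 := by
    rw [Finset.sum_insert (by decide), Finset.sum_insert (by decide), Finset.sum_singleton]; ring
  have S6 : ∑ i ∈ ({0,1,5} : Finset (Fin 6)), m i = m 0 + m 1 + m 5 := by
    rw [Finset.sum_insert (by decide), Finset.sum_insert (by decide), Finset.sum_singleton]; ring
  have F0 : ∀ (h : (0:ℕ) < 6), (⟨0, h⟩ : Fin 6) = 0 := fun _ => rfl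
  have F1 : ∀ (h : (1:ℕ) < 6), (⟨1, h⟩ : Fin 6) = 1 := fun _ => rfl
  have F2 : ∀ (h : (2:ℕ) < 6), (⟨2, h⟩ : Fin 6) = 2 := fun _ => rfl
  have F3 : ∀ (h : (3:ℕ) < 6), (⟨3, h⟩ : Fin 6) = 3 := fun _ => rfl
  have F4 : ∀ (h : (4:ℕ) < 6), (⟨4, h⟩ : Fin 6) = 4 := fun _ => rfl
  have F5 : ∀ (h : (5:ℕ) < 6), (⟨5, h⟩ : Fin 6) = 5 := fun _ => rfl
  -- T is a filter of the six candidate triples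
  have hTC : T = ({{0,1,2},{0,1,3},{0,2,3},{1,2,3},{0,1,4},{0,1,5}} :
        Finset (Finset (Fin 6))).filter
      (fun K : Finset (Fin 6) => 2 * ∑ i, m i ≤ 3 * ∑ i ∈ K, m i) := by
    rw [hTdef]
    ext K
    simp only [mem_filter, mem_univ, true_and, mem_insert, mem_singleton]
    constructor
    · rintro ⟨h3, hp⟩
      refine ⟨?_, hp⟩
      rw [Fin.sum_univ_six] at hp
      fin_cases K <;>
        first
          | decide
          | (revert h3; decide)
          | (exfalso;
             simp only [Finset.sum_mk, Multiset.map_coe, List.map_cons, List.map_nil,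
               Multiset.sum_coe, List.sum_cons, List.sum_nil, add_zero, F0, F1, F2, F3, F4, F5] at hp;
             omega)
    · rintro ⟨hK, hp⟩
      refine ⟨?_, hp⟩
      rcases hK with h|h|h|h|h|h <;> subst h <;> decide
  set S := m 0 + m 1 + m 2 + m 3 + m 4 + m 5 with hS
  have hsum : (∑ i, m i) = S := Fin.sum_univ_six m
  -- conditions for the six candidates
  have E1 : (2 * ∑ i, m i ≤ 3 * ∑ i ∈ ({0,1,2} : Finset (Fin 6)), m i) ↔
      2 * S ≤ 3 * (m 0 + m 1 + m 2) := by rw [hsum, S1]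
  have E2 : (2 * ∑ i, m i ≤ 3 * ∑ i ∈ ({0,1,3} : Finset (Fin 6)), m i) ↔
      2 * S ≤ 3 * (m 0 + m 1 + m 3) := by rw [hsum, S2]
  have E3 : (2 * ∑ i, m i ≤ 3 * ∑ i ∈ ({0,2,3} : Finset (Fin 6)), m i) ↔
      2 * S ≤ 3 * (m 0 + m 2 + m 3) := by rw [hsum, S3]
  have E4 : (2 * ∑ i, m i ≤ 3 * ∑ i ∈ ({1,2,3} : Finset (Fin 6)), m i) ↔
      2 * S ≤ 3 * (m 1 + m 2 + m 3) := by rw [hsum, S4]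
  have E5 : (2 * ∑ i, m i ≤ 3 * ∑ i ∈ ({0,1,4} : Finset (Fin 6)), m i) ↔
      2 * S ≤ 3 * (m 0 + m 1 + m 4) := by rw [hsum, S5]
  have E6 : (2 * ∑ i, m i ≤ 3 * ∑ i ∈ ({0,1,5} : Finset (Fin 6)), m i) ↔
      2 * S ≤ 3 * (m 0 + m 1 + m 5) := by rw [hsum, S6]
  by_cases c1 : 2 * S ≤ 3 * (m 0 + m 1 + m 2)
  · by_cases c2 : 2 * S ≤ 3 * (m 0 + m 1 + m 3)
    · by_cases c5 : 2 * S ≤ 3 * (m 0 + m 1 + m 4)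
      · by_cases c6 : 2 * S ≤ 3 * (m 0 + m 1 + m 5)
        · -- leaf: option 2
          have hT : T = ({{0,1,2},{0,1,3},{0,1,4},{0,1,5}} : Finset (Finset (Fin 6))) := by
            rw [hTC]
            simp only [Finset.filter_insert, Finset.filter_singleton,
              if_pos (E1.mpr c1), if_pos (E2.mpr c2), if_pos (E5.mpr c5), if_pos (E6.mpr c6),
              if_neg (fun h => absurd (E3.mp h) (by omega)),
              if_neg (fun h => absurd (E4.mp h) (by omega))]
              <;> decide
          rw [hT]
          exact ⟨by decide, fun _ => Or.inr (by decide)⟩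
        · -- leaf: {012,013,014}
          have hT : T = ({{0,1,2},{0,1,3},{0,1,4}} : Finset (Finset (Fin 6))) := by
            rw [hTC]
            simp only [Finset.filter_insert, Finset.filter_singleton,
              if_pos (E1.mpr c1), if_pos (E2.mpr c2), if_pos (E5.mpr c5),
              if_neg (fun h => absurd (E3.mp h) (by omega)),
              if_neg (fun h => absurd (E4.mp h) (by omega)),
              if_neg (fun h => absurd (E6.mp h) (by omega))]
              <;> decide
          rw [hT]
          exact ⟨by decide, fun h => absurd h (by decide)⟩
      · by_cases c3 : 2 * S ≤ 3 * (m 0 + m 2 + m 3)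
        · by_cases c4 : 2 * S ≤ 3 * (m 1 + m 2 + m 3)
          · -- leaf: option 1
            have hT : T = ({{0,1,2},{0,1,3},{0,2,3},{1,2,3}} : Finset (Finset (Fin 6))) := by
              rw [hTC]
              simp only [Finset.filter_insert, Finset.filter_singleton,
                if_pos (E1.mpr c1), if_pos (E2.mpr c2), if_pos (E3.mpr c3), if_pos (E4.mpr c4),
                if_neg (fun h => absurd (E5.mp h) (by omega)),
                if_neg (fun h => absurd (E6.mp h) (by omega))]
              <;> decide
            rw [hT]
            exact ⟨by decide, fun _ => Or.inl (by decide)⟩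
          · -- leaf: {012,013,023}
            have hT : T = ({{0,1,2},{0,1,3},{0,2,3}} : Finset (Finset (Fin 6))) := by
              rw [hTC]
              simp only [Finset.filter_insert, Finset.filter_singleton,
                if_pos (E1.mpr c1), if_pos (E2.mpr c2), if_pos (E3.mpr c3),
                if_neg (fun h => absurd (E4.mp h) (by omega)),
                if_neg (fun h => absurd (E5.mp h) (by omega)),
                if_neg (fun h => absurd (E6.mp h) (by omega))]
              <;> decide
            rw [hT]
            exact ⟨by decide, fun h => absurd h (by decide)⟩
        · -- leaf: {012,013}
          have hT : T = ({{0,1,2},{0,1,3}} : Finset (Finset (Fin 6))) := by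
            rw [hTC]
            simp only [Finset.filter_insert, Finset.filter_singleton,
              if_pos (E1.mpr c1), if_pos (E2.mpr c2),
              if_neg (fun h => absurd (E3.mp h) (by omega)),
              if_neg (fun h => absurd (E4.mp h) (by omega)),
              if_neg (fun h => absurd (E5.mp h) (by omega)),
              if_neg (fun h => absurd (E6.mp h) (by omega))]
              <;> decide
          rw [hT]
          exact ⟨by decide, fun h => absurd h (by decide)⟩
    · -- leaf: {012}
      have hT : T = ({{0,1,2}} : Finset (Finset (Fin 6))) := by
        rw [hTC]
        simp only [Finset.filter_insert, Finset.filter_singleton,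
          if_pos (E1.mpr c1),
          if_neg (fun h => absurd (E2.mp h) (by omega)),
          if_neg (fun h => absurd (E3.mp h) (by omega)),
          if_neg (fun h => absurd (E4.mp h) (by omega)),
          if_neg (fun h => absurd (E5.mp h) (by omega)),
          if_neg (fun h => absurd (E6.mp h) (by omega))]
              <;> decide
      rw [hT]
      exact ⟨by decide, fun h => absurd h (by decide)⟩
  · -- leaf: ∅
    have hT : T = (∅ : Finset (Finset (Fin 6))) := by
      rw [hTC]
      simp only [Finset.filter_insert, Finset.filter_singleton,
        if_neg (fun h => absurd (E1.mp h) (by omega)),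
        if_neg (fun h => absurd (E2.mp h) (by omega)),
        if_neg (fun h => absurd (E3.mp h) (by omega)),
        if_neg (fun h => absurd (E4.mp h) (by omega)),
        if_neg (fun h => absurd (E5.mp h) (by omega)),
        if_neg (fun h => absurd (E6.mp h) (by omega))]
              <;> decide
    rw [hT]
    exact ⟨by decide, fun h => absurd h (by decide)⟩
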